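/- A quadrilateral face of a 1-plane drawing can contain at most 2 halfedges: if each side of a convex quadrilateral is crossed by at most one segment connecting a vertex of the quadrilateral to an interior point of a non-adjacent side, and these segments are pairwise non-crossing, then there are at most 2 such segments. -/

import Mathlib

open Set

/-- Twice the signed area of the triangle `a b c`. -/
def xdet (a b c : ℝ × ℝ) : ℝ := (b.1 - a.1) * (c.2 - a.2) - (b.2 - a.2) * (c.1 - a.1)

lemma xdet_self_left (a b : ℝ × ℝ) : xdet a b a = 0 := by simp [xdet]

lemma xdet_self_right (a b : ℝ × ℝ) : xdet a b b = 0 := by simp [xdet]; ring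

lemma xdet_cyc (a b c : ℝ × ℝ) : xdet a b c = xdet b c a := by simp only [xdet]; ring

lemma xdet_combo (a b x y : ℝ × ℝ) (s t : ℝ) (hst : s + t = 1) :
    xdet a b (s • x + t • y) = s * xdet a b x + t * xdet a b y := by
  have ht : t = 1 - s := by linarith
  subst ht
  simp only [xdet, Prod.fst_add, Prod.snd_add, Prod.smul_fst, Prod.smul_snd, smul_eq_mul]
  ring

lemma mem_of_xdet {a b p : ℝ × ℝ} (hab : a ≠ b) (h : xdet a b p = 0) :
    p ∈ affineSpan ℝ ({a, b} : Set (ℝ × ℝ)) := by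
  have h1 : a.1 ≠ b.1 ∨ a.2 ≠ b.2 := by
    by_contra hc
    push_neg at hc
    exact hab (Prod.ext hc.1 hc.2)
  rcases h1 with h1 | h1
  · have hp : p = AffineMap.lineMap a b ((p.1 - a.1) / (b.1 - a.1)) := by
      rw [AffineMap.lineMap_apply]
      have hne : b.1 - a.1 ≠ 0 := sub_ne_zero.mpr (Ne.symm h1)
      apply Prod.ext
      · simp only [vsub_eq_sub, vadd_eq_add, Prod.fst_add, Prod.smul_fst, Prod.fst_sub,
          smul_eq_mul]
        field_simp; ring
      · simp only [vsub_eq_sub, vadd_eq_add, Prod.snd_add, Prod.smul_snd, Prod.snd_sub,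
          smul_eq_mul]
        field_simp
        simp only [xdet] at h
        linear_combination h
    rw [hp]
    exact AffineMap.lineMap_mem_affineSpan_pair _ _ _
  · have hp : p = AffineMap.lineMap a b ((p.2 - a.2) / (b.2 - a.2)) := by
      rw [AffineMap.lineMap_apply]
      have hne : b.2 - a.2 ≠ 0 := sub_ne_zero.mpr (Ne.symm h1)
      apply Prod.ext
      · simp only [vsub_eq_sub, vadd_eq_add, Prod.fst_add, Prod.smul_fst, Prod.fst_sub,
          smul_eq_mul]
        field_simp
        simp only [xdet] at h
        linear_combination -h
      · simp only [vsub_eq_sub, vadd_eq_add, Prod.snd_add, Prod.smul_snd, Prod.snd_sub,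
          smul_eq_mul]
        field_simp; ring
    rw [hp]
    exact AffineMap.lineMap_mem_affineSpan_pair _ _ _

lemma xdet_of_mem {a b p : ℝ × ℝ} (h : p ∈ affineSpan ℝ ({a, b} : Set (ℝ × ℝ))) :
    xdet a b p = 0 := by
  let S : AffineSubspace ℝ (ℝ × ℝ) :=
    { carrier := {x | xdet a b x = 0}
      smul_vsub_vadd_mem' := by
        intro c p1 p2 p3 h1 h2 h3
        simp only [Set.mem_setOf_eq] at h1 h2 h3 ⊢
        simp only [xdet, vsub_eq_sub, vadd_eq_add, Prod.fst_add, Prod.snd_add, Prod.smul_fst,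
          Prod.smul_snd, Prod.fst_sub, Prod.snd_sub, smul_eq_mul] at h1 h2 h3 ⊢
        linear_combination c * h1 - c * h2 + h3 }
  have hle : affineSpan ℝ ({a, b} : Set (ℝ × ℝ)) ≤ S := by
    rw [affineSpan_le]
    rintro x (h | h)
    · show xdet a b x = 0
      rw [h]; exact xdet_self_left a b
    · show xdet a b x = 0
      rw [h]; exact xdet_self_right a b
  exact hle h
lemma sSameSide_xdet {a b x y : ℝ × ℝ} (hab : a ≠ b)
    (h : (affineSpan ℝ ({a, b} : Set (ℝ × ℝ))).SSameSide x y) :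
    0 < xdet a b x * xdet a b y := by
  obtain ⟨⟨p₁, hp₁, p₂, hp₂, hray⟩, hx, hy⟩ := h
  have hdx : xdet a b x ≠ 0 := fun h0 => hx (mem_of_xdet hab h0)
  have hdy : xdet a b y ≠ 0 := fun h0 => hy (mem_of_xdet hab h0)
  have e₁ : xdet a b p₁ = 0 := xdet_of_mem hp₁
  have e₂ : xdet a b p₂ = 0 := xdet_of_mem hp₂
  rcases hray with h0 | h0 | ⟨r₁, r₂, hr₁, hr₂, hrr⟩
  · exfalso
    apply hx
    have : x = p₁ := by rwa [vsub_eq_sub, sub_eq_zero] at h0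
    rw [this]; exact hp₁
  · exfalso
    apply hy
    have : y = p₂ := by rwa [vsub_eq_sub, sub_eq_zero] at h0
    rw [this]; exact hp₂
  · have hc1 : r₁ * (x.1 - p₁.1) = r₂ * (y.1 - p₂.1) := by
      have := congrArg Prod.fst hrr
      simpa [vsub_eq_sub] using this
    have hc2 : r₁ * (x.2 - p₁.2) = r₂ * (y.2 - p₂.2) := by
      have := congrArg Prod.snd hrr
      simpa [vsub_eq_sub] using this
    have key : r₁ * xdet a b x = r₂ * xdet a b y := by
      simp only [xdet] at e₁ e₂ ⊢
      linear_combination (b.1 - a.1) * hc2 - (b.2 - a.2) * hc1 + r₁ * e₁ - r₂ * e₂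
    have h3 : r₁ * (xdet a b x * xdet a b x) = r₂ * (xdet a b x * xdet a b y) := by
      linear_combination xdet a b x * key
    nlinarith [h3, mul_pos hr₁ (mul_self_pos.mpr hdx), hr₂]

lemma adjacent_ne (q : Fin 4 → ℝ × ℝ)
    (hconvex : ∀ i : Fin 4, (affineSpan ℝ {q i, q (i + 1)}).SSameSide (q (i + 2)) (q (i + 3)))
    (m : Fin 4) : q m ≠ q (m + 1) := by
  intro h
  have hadd : m + 1 + 3 = m := by
    have : ∀ k : Fin 4, k + 1 + 3 = k := by decide
    exact this m
  have h2 := (hconvex (m + 1)).2.2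
  rw [hadd] at h2
  apply h2
  rw [h]
  exact subset_affineSpan ℝ _ (by simp)

lemma notInterior (q : Fin 4 → ℝ × ℝ)
    (hconvex : ∀ i : Fin 4, (affineSpan ℝ {q i, q (i + 1)}).SSameSide (q (i + 2)) (q (i + 3)))
    (m : Fin 4) {x : ℝ × ℝ} (hx : xdet (q m) (q (m + 1)) x = 0) :
    x ∉ interior (convexHull ℝ (Set.range q)) := by
  intro hxi
  have hne : q m ≠ q (m + 1) := adjacent_ne q hconvex m
  have hP : 0 < xdet (q m) (q (m + 1)) (q (m + 2)) * xdet (q m) (q (m + 1)) (q (m + 3)) :=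
    sSameSide_xdet hne (hconvex m)
  set σ := xdet (q m) (q (m + 1)) (q (m + 2)) with hσdef
  have hσ : σ ≠ 0 := by
    intro h
    rw [h] at hP
    simp at hP
  have hKsub : convexHull ℝ (Set.range q) ⊆ {p | 0 ≤ σ * xdet (q m) (q (m + 1)) p} := by
    apply convexHull_min
    · rintro _ ⟨j, rfl⟩
      have hj : ∀ m j : Fin 4, j = m ∨ j = m + 1 ∨ j = m + 2 ∨ j = m + 3 := by decide
      rcases hj m j with h | h | h | h <;> subst h
      · simp [Set.mem_setOf_eq, xdet_self_left]
      · simp [Set.mem_setOf_eq, xdet_self_right]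
      · exact mul_self_nonneg σ
      · exact le_of_lt hP
    · intro p hp r hr s t hs ht hst
      simp only [Set.mem_setOf_eq] at hp hr ⊢
      rw [xdet_combo _ _ _ _ _ _ hst]
      nlinarith [mul_nonneg hs hp, mul_nonneg ht hr]
  set z := q (m + 2) with hzdef
  have hxz : x ≠ z := by
    intro h
    apply hσ
    rw [hσdef, ← h]; exact hx
  obtain ⟨ε, hε, hball⟩ := Metric.isOpen_iff.mp isOpen_interior x hxi
  have hnz : (0:ℝ) < ‖x - z‖ := norm_pos_iff.mpr (sub_ne_zero.mpr hxz)
  set δ := ε / (2 * ‖x - z‖) with hδdef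
  have hδ : 0 < δ := by positivity
  have hmem : x + δ • (x - z) ∈ Metric.ball x ε := by
    rw [Metric.mem_ball, dist_eq_norm]
    have h1 : x + δ • (x - z) - x = δ • (x - z) := by abel
    rw [h1, norm_smul, Real.norm_eq_abs, abs_of_pos hδ]
    have h2 : δ * ‖x - z‖ = ε / 2 := by
      rw [hδdef]; field_simp
    rw [h2]; linarith
  have hK2 : x + δ • (x - z) ∈ convexHull ℝ (Set.range q) := interior_subset (hball hmem)
  have hle := hKsub hK2
  simp only [Set.mem_setOf_eq] at hle
  have hco : x + δ • (x - z) = (1 + δ) • x + (-δ) • z := by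
    apply Prod.ext <;>
      simp only [Prod.fst_add, Prod.snd_add, Prod.smul_fst, Prod.smul_snd, Prod.fst_sub,
        Prod.snd_sub, smul_eq_mul] <;> ring
  rw [hco, xdet_combo _ _ _ _ _ _ (by ring), hx, ← hσdef] at hle
  nlinarith [mul_self_pos.mpr hσ]
lemma key_cross {K : Set (ℝ × ℝ)} (hK : Convex ℝ K) {a b c d : ℝ × ℝ} (hab : a ≠ b)
    (haK : a ∈ K) (hbK : b ∈ K) (hai : a ∉ interior K) (hbi : b ∉ interior K)
    (hcd : openSegment ℝ c d ⊆ interior K)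
    (hs : xdet a b c * xdet a b d < 0) :
    (openSegment ℝ a b ∩ openSegment ℝ c d).Nonempty := by
  set Dc := xdet a b c with hDc
  set Dd := xdet a b d with hDd
  have hne : Dc - Dd ≠ 0 := by
    intro h
    have he : Dc = Dd := by linarith
    rw [he] at hs
    nlinarith [mul_self_nonneg Dd]
  set t := Dc / (Dc - Dd) with htdef
  have hDc0 : Dc ≠ 0 := by intro h; rw [h] at hs; simp at hs
  have ht0 : 0 < t := by
    rw [htdef, div_pos_iff]
    rcases hDc0.lt_or_gt with h | h
    · right; constructor
      · exact h
      · nlinarith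
    · left; constructor
      · exact h
      · nlinarith
  have hne' : Dd - Dc ≠ 0 := fun h => hne (by linarith)
  have h1t : 1 - t = Dd / (Dd - Dc) := by
    rw [htdef]
    field_simp
    ring
  have ht1 : t < 1 := by
    have hDd0 : Dd ≠ 0 := by intro h; rw [h] at hs; simp at hs
    have : 0 < 1 - t := by
      rw [h1t, div_pos_iff]
      rcases hDd0.lt_or_gt with h | h
      · right; exact ⟨h, by nlinarith⟩
      · left; exact ⟨h, by nlinarith⟩
    linarith
  set x := (1 - t) • c + t • d with hxdef
  have hxseg : x ∈ openSegment ℝ c d := by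
    rw [openSegment_eq_image]
    exact ⟨t, ⟨ht0, ht1⟩, rfl⟩
  have hxint : x ∈ interior K := hcd hxseg
  have hdx : xdet a b x = 0 := by
    rw [hxdef, xdet_combo _ _ _ _ _ _ (by ring), ← hDc, ← hDd, htdef]
    field_simp
    ring
  have hxK : x ∈ K := interior_subset hxint
  -- solve for u
  have hcoords : a.1 ≠ b.1 ∨ a.2 ≠ b.2 := by
    by_contra hc; push_neg at hc; exact hab (Prod.ext hc.1 hc.2)
  obtain ⟨u, hu⟩ : ∃ u : ℝ, x = (1 - u) • a + u • b := by
    rcases hcoords with h1 | h1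
    · refine ⟨(x.1 - a.1) / (b.1 - a.1), ?_⟩
      have hne1 : b.1 - a.1 ≠ 0 := sub_ne_zero.mpr (Ne.symm h1)
      apply Prod.ext <;>
        simp only [Prod.fst_add, Prod.snd_add, Prod.smul_fst, Prod.smul_snd, smul_eq_mul]
      · field_simp; ring
      · simp only [xdet] at hdx
        field_simp
        first | linear_combination hdx | linear_combination -hdx
    · refine ⟨(x.2 - a.2) / (b.2 - a.2), ?_⟩
      have hne1 : b.2 - a.2 ≠ 0 := sub_ne_zero.mpr (Ne.symm h1)
      apply Prod.ext <;>
        simp only [Prod.fst_add, Prod.snd_add, Prod.smul_fst, Prod.smul_snd, smul_eq_mul]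
      · simp only [xdet] at hdx
        field_simp
        first | linear_combination hdx | linear_combination -hdx
      · field_simp; ring
  have hx1 : x.1 = (1 - u) * a.1 + u * b.1 := by rw [hu]; simp
  have hx2 : x.2 = (1 - u) * a.2 + u * b.2 := by rw [hu]; simp
  have hu0 : 0 < u := by
    by_contra hle
    push_neg at hle
    rcases eq_or_lt_of_le hle with h | h
    · apply hai
      have hxa : x = a := by rw [hu, h]; simp
      rwa [hxa] at hxint
    · apply hai
      have hmem : a ∈ openSegment ℝ x b := by
        rw [openSegment_eq_image]
        have hne2 : (1:ℝ) - u ≠ 0 := by linarith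
        refine ⟨-u / (1 - u), ⟨div_pos (by linarith) (by linarith), ?_⟩, ?_⟩
        · rw [div_lt_one (by linarith)]; linarith
        · apply Prod.ext <;>
            simp only [Prod.fst_add, Prod.snd_add, Prod.smul_fst, Prod.smul_snd, smul_eq_mul]
          · field_simp
            first | linear_combination hx1 | linear_combination -hx1 |
              linear_combination (1 - u) * hx1 | linear_combination (u - 1) * hx1
          · field_simp
            first | linear_combination hx2 | linear_combination -hx2 |
              linear_combination (1 - u) * hx2 | linear_combination (u - 1) * hx2
      exact hK.openSegment_interior_closure_subset_interior hxint (subset_closure hbK) hmem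
  have hu1 : u < 1 := by
    by_contra hle
    push_neg at hle
    rcases eq_or_lt_of_le hle with h | h
    · apply hbi
      have hxb : x = b := by rw [hu, ← h]; simp
      rwa [hxb] at hxint
    · apply hbi
      have hmem : b ∈ openSegment ℝ x a := by
        rw [openSegment_eq_image]
        have hne2 : (u:ℝ) ≠ 0 := by linarith
        refine ⟨(u - 1) / u, ⟨div_pos (by linarith) (by linarith), ?_⟩, ?_⟩
        · rw [div_lt_one (by linarith)]; linarith
        · apply Prod.ext <;>
            simp only [Prod.fst_add, Prod.snd_add, Prod.smul_fst, Prod.smul_snd, smul_eq_mul]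
          · field_simp
            first | linear_combination hx1 | linear_combination -hx1 |
              linear_combination u * hx1 | linear_combination (-u) * hx1
          · field_simp
            first | linear_combination hx2 | linear_combination -hx2 |
              linear_combination u * hx2 | linear_combination (-u) * hx2
      exact hK.openSegment_interior_closure_subset_interior hxint (subset_closure haK) hmem
  refine ⟨x, ?_, hxseg⟩
  rw [openSegment_eq_image]
  exact ⟨u, ⟨hu0, hu1⟩, hu.symm⟩
section Cases

variable {v0 v1 v2 v3 b p : ℝ × ℝ} {t u : ℝ}

lemma caseA (ht0 : 0 < t) (ht1 : t < 1) (hu0 : 0 < u) (hu1 : u < 1)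
    (hb : b = (1 - t) • v0 + t • v1) (hp : p = (1 - u) • v1 + u • v2)
    (hAD : 0 < xdet v0 v1 v2 * xdet v2 v3 v0) (hAC : 0 < xdet v0 v1 v2 * xdet v1 v2 v3) :
    xdet v2 b v3 * xdet v2 b p < 0 := by
  have hid : xdet v2 b v3 * xdet v2 b p =
      -((1 - u) * (1 - t) * ((1 - t) * (xdet v0 v1 v2 * xdet v2 v3 v0) +
        t * (xdet v0 v1 v2 * xdet v1 v2 v3))) := by
    subst hb hp
    simp only [xdet, Prod.fst_add, Prod.snd_add, Prod.smul_fst, Prod.smul_snd, smul_eq_mul]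
    ring
  rw [hid]
  have h1 : 0 < (1 - u) * (1 - t) * ((1 - t) * (xdet v0 v1 v2 * xdet v2 v3 v0) +
      t * (xdet v0 v1 v2 * xdet v1 v2 v3)) := by
    apply mul_pos (mul_pos (by linarith) (by linarith))
    have := mul_pos (by linarith : (0:ℝ) < 1 - t) hAD
    have := mul_pos ht0 hAC
    linarith
  linarith

lemma caseB (ht0 : 0 < t) (ht1 : t < 1) (hu0 : 0 < u) (hu1 : u < 1)
    (hb : b = (1 - t) • v0 + t • v1) (hp : p = (1 - u) • v1 + u • v2)
    (hA : xdet v0 v1 v2 ≠ 0) :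
    xdet v2 b v0 * xdet v2 b p < 0 := by
  have hid : xdet v2 b v0 * xdet v2 b p =
      -(t * (1 - u) * (1 - t) * (xdet v0 v1 v2 * xdet v0 v1 v2)) := by
    subst hb hp
    simp only [xdet, Prod.fst_add, Prod.snd_add, Prod.smul_fst, Prod.smul_snd, smul_eq_mul]
    ring
  rw [hid]
  have h1 : 0 < t * (1 - u) * (1 - t) * (xdet v0 v1 v2 * xdet v0 v1 v2) :=
    mul_pos (mul_pos (mul_pos ht0 (by linarith)) (by linarith)) (mul_self_pos.mpr hA)
  linarith

lemma caseC (ht0 : 0 < t) (ht1 : t < 1) (hu0 : 0 < u) (hu1 : u < 1)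
    (hb : b = (1 - t) • v0 + t • v1) (hp : p = (1 - u) • v1 + u • v2)
    (hB : xdet v0 v1 v3 ≠ 0)
    (hBC : 0 < xdet v0 v1 v3 * xdet v1 v2 v3) (hBD : 0 < xdet v0 v1 v3 * xdet v2 v3 v0) :
    xdet v3 b v0 * xdet v3 b p < 0 := by
  have hid : xdet v3 b v0 * xdet v3 b p =
      -(t * ((1 - t) * (1 - u) * (xdet v0 v1 v3 * xdet v0 v1 v3) +
        t * u * (xdet v0 v1 v3 * xdet v1 v2 v3) +
        u * (1 - t) * (xdet v0 v1 v3 * xdet v2 v3 v0))) := by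
    subst hb hp
    simp only [xdet, Prod.fst_add, Prod.snd_add, Prod.smul_fst, Prod.smul_snd, smul_eq_mul]
    ring
  rw [hid]
  have h1 : 0 < t * ((1 - t) * (1 - u) * (xdet v0 v1 v3 * xdet v0 v1 v3) +
      t * u * (xdet v0 v1 v3 * xdet v1 v2 v3) +
      u * (1 - t) * (xdet v0 v1 v3 * xdet v2 v3 v0)) := by
    apply mul_pos ht0
    have h2 := mul_pos (mul_pos (by linarith : (0:ℝ) < 1 - t) (by linarith : (0:ℝ) < 1 - u))
      (mul_self_pos.mpr hB)
    have h3 := mul_pos (mul_pos ht0 hu0) hBC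
    have h4 := mul_pos (mul_pos hu0 (by linarith : (0:ℝ) < 1 - t)) hBD
    linarith
  linarith

end Cases
/-- A quadrilateral face of a 1-plane drawing contains at most two halfedges.
`q 0, q 1, q 2, q 3` are the vertices of a convex quadrilateral (in cyclic order:
for each side, the remaining two vertices lie strictly on the same side of its line).
There are `N` halfedges: the `i`-th goes from the vertex `q (vtx i)` to the point
`pt i`, which is an interior point of the non-adjacent side with endpoints
`q (side i)` and `q (side i + 1)`.  Each side is crossed by (i.e. carries the endpoint
of) at most one halfedge, the halfedges are pairwise non-crossing, and each halfedge
lies inside the quadrilateral.  Then `N ≤ 2`. -/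
theorem stmt7 (q : Fin 4 → ℝ × ℝ)
    (hconvex : ∀ i : Fin 4, (affineSpan ℝ {q i, q (i + 1)}).SSameSide (q (i + 2)) (q (i + 3)))
    (N : ℕ) (vtx : Fin N → Fin 4) (pt : Fin N → ℝ × ℝ) (side : Fin N → Fin 4)
    (hpt : ∀ i, pt i ∈ openSegment ℝ (q (side i)) (q (side i + 1)))
    (hnonadj : ∀ i, side i ≠ vtx i ∧ side i + 1 ≠ vtx i)
    (hsideinj : Function.Injective side)
    (hin : ∀ i, openSegment ℝ (q (vtx i)) (pt i) ⊆ interior (convexHull ℝ (Set.range q)))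
    (hnc : ∀ i j, i ≠ j →
      openSegment ℝ (q (vtx i)) (pt i) ∩ openSegment ℝ (q (vtx j)) (pt j) = ∅) :
    N ≤ 2 := by
  by_contra hN
  push_neg at hN
  have hK : Convex ℝ (convexHull ℝ (Set.range q)) := convex_convexHull ℝ _
  have f1 : ∀ s v : Fin 4, s ≠ v → s + 1 ≠ v → v = s + 2 ∨ v = s + 3 := by decide
  have f2 : ∀ s : Fin 4, s + 1 + 1 = s + 2 := by decide
  have f3 : ∀ s : Fin 4, s + 1 + 2 = s + 3 := by decide
  have f4 : ∀ s : Fin 4, s + 1 + 3 = s := by decide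
  have f5 : ∀ s : Fin 4, s + 2 + 1 = s + 3 := by decide
  have f6 : ∀ s : Fin 4, s + 2 + 2 = s := by decide
  have f7 : ∀ s : Fin 4, s + 2 + 3 = s + 1 := by decide
  have f8 : ∀ s : Fin 4, s + 3 + 1 = s := by decide
  have f9 : ∀ s : Fin 4, s + 3 + 2 = s + 1 := by decide
  have f10 : ∀ s : Fin 4, s + 3 + 3 = s + 2 := by decide
  have hadj : ∀ i j : Fin N, i ≠ j → side j = side i + 1 →
      vtx i = side i + 3 ∧ vtx j = side i + 3 := by
    intro i j hij hsj
    have hG0 := sSameSide_xdet (adjacent_ne q hconvex (side i)) (hconvex (side i))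
    have hG1 := sSameSide_xdet (adjacent_ne q hconvex (side i + 1)) (hconvex (side i + 1))
    have hG2 := sSameSide_xdet (adjacent_ne q hconvex (side i + 2)) (hconvex (side i + 2))
    have hG3 := sSameSide_xdet (adjacent_ne q hconvex (side i + 3)) (hconvex (side i + 3))
    rw [f2 (side i), f3 (side i), f4 (side i)] at hG1
    rw [f5 (side i), f6 (side i), f7 (side i)] at hG2
    rw [f8 (side i), f9 (side i), f10 (side i)] at hG3
    rw [← xdet_cyc (q (side i)) (q (side i + 1)) (q (side i + 2))] at hG1
    rw [← xdet_cyc (q (side i + 1)) (q (side i + 2)) (q (side i + 3))] at hG2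
    rw [← xdet_cyc (q (side i + 1)) (q (side i + 3)) (q (side i)),
        ← xdet_cyc (q (side i)) (q (side i + 1)) (q (side i + 3)),
        ← xdet_cyc (q (side i + 2)) (q (side i + 3)) (q (side i))] at hG3
    -- hG0 : 0 < A * B, hG1 : 0 < C * A, hG2 : 0 < D * C, hG3 : 0 < B * D
    have hAne : xdet (q (side i)) (q (side i + 1)) (q (side i + 2)) ≠ 0 := by
      intro h; rw [h] at hG0; simp at hG0
    have hBne : xdet (q (side i)) (q (side i + 1)) (q (side i + 3)) ≠ 0 := by
      intro h; rw [h] at hG3; simp at hG3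
    have hAC : 0 < xdet (q (side i)) (q (side i + 1)) (q (side i + 2)) *
        xdet (q (side i + 1)) (q (side i + 2)) (q (side i + 3)) := by
      rw [mul_comm]; exact hG1
    have hAD : 0 < xdet (q (side i)) (q (side i + 1)) (q (side i + 2)) *
        xdet (q (side i + 2)) (q (side i + 3)) (q (side i)) := by
      nlinarith [mul_pos hG0 hG3, sq_nonneg (xdet (q (side i)) (q (side i + 1)) (q (side i + 3)))]
    have hBC : 0 < xdet (q (side i)) (q (side i + 1)) (q (side i + 3)) *
        xdet (q (side i + 1)) (q (side i + 2)) (q (side i + 3)) := by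
      nlinarith [mul_pos hG0 hG1, sq_nonneg (xdet (q (side i)) (q (side i + 1)) (q (side i + 2)))]
    -- parametrize pt i and pt j
    have hbseg := hpt i
    rw [openSegment_eq_image] at hbseg
    obtain ⟨t, ⟨ht0, ht1⟩, hbt⟩ := hbseg
    have hpseg := hpt j
    rw [hsj, f2 (side i), openSegment_eq_image] at hpseg
    obtain ⟨u, ⟨hu0, hu1⟩, hpu⟩ := hpseg
    -- classify vertices
    have hvi := f1 (side i) (vtx i) (hnonadj i).1 (hnonadj i).2
    have hvj := f1 (side j) (vtx j) (hnonadj j).1 (hnonadj j).2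
    rw [hsj, f3 (side i), f4 (side i)] at hvj
    -- common facts
    have hbdet : xdet (q (side i)) (q (side i + 1)) (pt i) = 0 := by
      rw [← hbt, xdet_combo _ _ _ _ _ _ (by ring), xdet_self_left, xdet_self_right]
      ring
    have haK : q (vtx i) ∈ convexHull ℝ (Set.range q) := subset_convexHull ℝ _ ⟨vtx i, rfl⟩
    have hbK : pt i ∈ convexHull ℝ (Set.range q) := by
      rw [← hbt]
      exact hK (subset_convexHull ℝ _ ⟨side i, rfl⟩) (subset_convexHull ℝ _ ⟨side i + 1, rfl⟩)
        (by linarith) (le_of_lt ht0) (by ring)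
    have hai : q (vtx i) ∉ interior (convexHull ℝ (Set.range q)) :=
      notInterior q hconvex (vtx i) (xdet_self_left _ _)
    have hbi : pt i ∉ interior (convexHull ℝ (Set.range q)) :=
      notInterior q hconvex (side i) hbdet
    have hcontra : xdet (q (vtx i)) (pt i) (q (vtx j)) * xdet (q (vtx i)) (pt i) (pt j) < 0 →
        False := by
      intro hsign
      have habne : q (vtx i) ≠ pt i := by
        intro h
        rcases hvi with hvi | hvi
        · apply hAne
          rw [← hvi, h]
          exact hbdet
        · apply hBne
          rw [← hvi, h]
          exact hbdet
      obtain ⟨x, hx1, hx2⟩ := key_cross hK habne haK hbK hai hbi (hin j) hsign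
      have hempty := hnc i j hij
      rw [Set.eq_empty_iff_forall_notMem] at hempty
      exact hempty x ⟨hx1, hx2⟩
    rcases hvi with hvi | hvi <;> rcases hvj with hvj | hvj
    · exfalso
      apply hcontra
      rw [hvi, hvj]
      exact caseA ht0 ht1 hu0 hu1 hbt.symm hpu.symm hAD hAC
    · exfalso
      apply hcontra
      rw [hvi, hvj]
      exact caseB ht0 ht1 hu0 hu1 hbt.symm hpu.symm hAne
    · exact ⟨hvi, hvj⟩
    · exfalso
      apply hcontra
      rw [hvi, hvj]
      exact caseC ht0 ht1 hu0 hu1 hbt.symm hpu.symm hBne hBC hG3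
  -- combinatorial conclusion
  have hchain : ∀ i j k : Fin N, i ≠ j → j ≠ k → side j = side i + 1 → side k = side j + 1 →
      False := by
    intro i j k hij hjk h1 h2
    obtain ⟨-, hv1⟩ := hadj i j hij h1
    obtain ⟨hv2, -⟩ := hadj j k hjk h2
    rw [h1] at hv2
    rw [hv1] at hv2
    have hne34 : ∀ s : Fin 4, s + 3 ≠ s + 1 + 3 := by decide
    exact hne34 (side i) hv2
  have hcases : ∀ a b c : Fin 4, a ≠ b → a ≠ c → b ≠ c →
      (b = a + 1 ∧ c = b + 1) ∨ (c = a + 1 ∧ b = c + 1) ∨ (a = b + 1 ∧ c = a + 1) ∨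
      (c = b + 1 ∧ a = c + 1) ∨ (a = c + 1 ∧ b = a + 1) ∨ (b = c + 1 ∧ a = b + 1) := by decide
  have h0N : (0 : ℕ) < N := by omega
  have h1N : (1 : ℕ) < N := by omega
  have h2N : (2 : ℕ) < N := by omega
  let i0 : Fin N := ⟨0, h0N⟩
  let i1 : Fin N := ⟨1, h1N⟩
  let i2 : Fin N := ⟨2, h2N⟩
  have h01 : i0 ≠ i1 := Fin.ne_of_val_ne (by simp)
  have h02 : i0 ≠ i2 := Fin.ne_of_val_ne (by simp)
  have h12 : i1 ≠ i2 := Fin.ne_of_val_ne (by simp [i1, i2])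
  have hs01 : side i0 ≠ side i1 := fun h => h01 (hsideinj h)
  have hs02 : side i0 ≠ side i2 := fun h => h02 (hsideinj h)
  have hs12 : side i1 ≠ side i2 := fun h => h12 (hsideinj h)
  rcases hcases (side i0) (side i1) (side i2) hs01 hs02 hs12 with
    ⟨h1, h2⟩ | ⟨h1, h2⟩ | ⟨h1, h2⟩ | ⟨h1, h2⟩ | ⟨h1, h2⟩ | ⟨h1, h2⟩
  · exact hchain i0 i1 i2 h01 h12 h1 h2
  · exact hchain i0 i2 i1 h02 (Ne.symm h12) h1 h2
  · exact hchain i1 i0 i2 (Ne.symm h01) h02 h1 h2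
  · exact hchain i1 i2 i0 h12 (Ne.symm h02) h1 h2
  · exact hchain i2 i0 i1 (Ne.symm h02) h01 h1 h2
  · exact hchain i2 i1 i0 (Ne.symm h12) (Ne.symm h01) h1 h2
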